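/- Let S̃ : (0,∞) → ℝ be continuous with S̃(p) > 0 for all p > 0, suppose S̃(p)/p⁴ → L as p → 0⁺ for some constant L ∈ (0,∞), and suppose there exist c > 0 and R > 0 with S̃(p) ≥ c·p for all p ≥ R. For ν > 0 define p_ν = (∫₀^∞ e^{−S̃(ξ)/ν} ξ dξ) / (∫₀^∞ e^{−S̃(ξ)/ν} dξ). Then ν^{−1/4} · p_ν → L^{−1/4} · Γ(1/2)/Γ(1/4) as ν → 0⁺; in particular p_ν = const · ν^{1/4} (1 + o(1)). -/

import Mathlib

open Real MeasureTheory Set Filter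

private lemma laplace_aux_alg (r a b : ℝ) (hr : r ≠ 0) :
    r⁻¹ * ((r ^ 2 * a) / (r * b)) = a / b := by
  rw [pow_two, mul_assoc, mul_div_mul_left _ _ hr, ← mul_div_assoc, inv_mul_cancel_left₀ hr]

private lemma laplace_int_quartic (L : ℝ) (hL : 0 < L) :
    IntegrableOn (fun t : ℝ => exp (-(L * t ^ 4))) (Ioi 0) := by
  have h := integrableOn_rpow_mul_exp_neg_mul_rpow (p := 4) (s := 0) (b := L)
    (by norm_num) (by norm_num) hL
  refine h.congr_fun (fun x hx => ?_) measurableSet_Ioi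
  dsimp only
  rw [rpow_zero, one_mul, ← Real.rpow_natCast x 4, neg_mul]
  norm_num

private lemma laplace_int_quartic_mul (L : ℝ) (hL : 0 < L) :
    IntegrableOn (fun t : ℝ => exp (-(L * t ^ 4)) * t) (Ioi 0) := by
  have h := integrableOn_rpow_mul_exp_neg_mul_rpow (p := 4) (s := 1) (b := L)
    (by norm_num) (by norm_num) hL
  refine h.congr_fun (fun x hx => ?_) measurableSet_Ioi
  dsimp only
  rw [rpow_one, ← Real.rpow_natCast x 4, neg_mul, mul_comm]
  norm_num

private lemma laplace_int_exp_mul (c : ℝ) (hc : 0 < c) :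
    IntegrableOn (fun t : ℝ => exp (-(c * t)) * t) (Ioi 0) := by
  have h := integrableOn_rpow_mul_exp_neg_mul_rpow (p := 1) (s := 1) (b := c)
    (by norm_num) (by norm_num) hc
  refine h.congr_fun (fun x hx => ?_) measurableSet_Ioi
  dsimp only
  rw [rpow_one, mul_comm, neg_mul]

private lemma laplace_int_exp (c : ℝ) (hc : 0 < c) :
    IntegrableOn (fun t : ℝ => exp (-(c * t))) (Ioi 0) := by
  have h := exp_neg_integrableOn_Ioi 0 hc
  exact h.congr_fun (fun x hx => by dsimp only; rw [neg_mul]) measurableSet_Ioi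

private lemma laplace_val_A (L : ℝ) (hL : 0 < L) :
    (∫ t in Ioi (0 : ℝ), exp (-(L * t ^ 4)) * t) = L ^ (-(1 / 2) : ℝ) * (1 / 4) * Gamma (1 / 2) := by
  have h := integral_rpow_mul_exp_neg_mul_rpow (p := 4) (q := 1) (b := L)
    (by norm_num) (by norm_num) hL
  rw [show ((-(1 + 1)) / 4 : ℝ) = -(1 / 2) by norm_num,
    show ((1 + 1) / 4 : ℝ) = 1 / 2 by norm_num] at h
  rw [← h]
  refine setIntegral_congr_fun measurableSet_Ioi (fun x hx => ?_)
  rw [rpow_one, ← Real.rpow_natCast x 4, neg_mul, mul_comm]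
  norm_num

private lemma laplace_val_B (L : ℝ) (hL : 0 < L) :
    (∫ t in Ioi (0 : ℝ), exp (-(L * t ^ 4))) = L ^ (-(1 / 4) : ℝ) * (1 / 4) * Gamma (1 / 4) := by
  have h := integral_rpow_mul_exp_neg_mul_rpow (p := 4) (q := 0) (b := L)
    (by norm_num) (by norm_num) hL
  rw [show ((-(0 + 1)) / 4 : ℝ) = -(1 / 4) by norm_num,
    show ((0 + 1) / 4 : ℝ) = 1 / 4 by norm_num] at h
  rw [← h]
  refine setIntegral_congr_fun measurableSet_Ioi (fun x hx => ?_)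
  rw [rpow_zero, one_mul, ← Real.rpow_natCast x 4, neg_mul]
  norm_num

private lemma laplace_val_quot (L : ℝ) (hL : 0 < L) :
    (L ^ (-(1 / 2) : ℝ) * (1 / 4) * Gamma (1 / 2)) / (L ^ (-(1 / 4) : ℝ) * (1 / 4) * Gamma (1 / 4))
      = L ^ (-(1 / 4) : ℝ) * (Gamma (1 / 2) / Gamma (1 / 4)) := by
  have h2 : (L : ℝ) ^ (-(1 / 2) : ℝ) = L ^ (-(1 / 4) : ℝ) * L ^ (-(1 / 4) : ℝ) := by
    rw [← Real.rpow_add hL]; norm_num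
  have hb : (L : ℝ) ^ (-(1 / 4) : ℝ) ≠ 0 := (rpow_pos_of_pos hL _).ne'
  have hg : Gamma (1 / 4 : ℝ) ≠ 0 := (Gamma_pos_of_pos (by norm_num)).ne'
  rw [h2]
  field_simp

/-- Quartic (critical-point) Laplace asymptotics: if the positive continuous phase S̃
satisfies S̃(p)/p⁴ → L ∈ (0,∞) as p → 0⁺ and grows at least linearly at infinity,
then the Laplace quotient p_ν = (∫₀^∞ e^{−S̃(ξ)/ν} ξ dξ)/(∫₀^∞ e^{−S̃(ξ)/ν} dξ)
satisfies ν^{−1/4}·p_ν → L^{−1/4}·Γ(1/2)/Γ(1/4) as ν → 0⁺. -/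
theorem laplace_quotient_quartic_scaling (S : ℝ → ℝ)
    (hcont : ContinuousOn S (Set.Ioi 0)) (hpos : ∀ p : ℝ, 0 < p → 0 < S p)
    (L : ℝ) (hL : 0 < L)
    (hlim : Filter.Tendsto (fun p : ℝ => S p / p ^ 4)
      (nhdsWithin 0 (Set.Ioi 0)) (nhds L))
    (hgrow : ∃ c > (0 : ℝ), ∃ R > (0 : ℝ), ∀ p ≥ R, c * p ≤ S p) :
    Filter.Tendsto
      (fun ν : ℝ => ν ^ (-(1 / 4) : ℝ) *
        ((∫ ξ in Set.Ioi (0 : ℝ), Real.exp (-S ξ / ν) * ξ) /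
          (∫ ξ in Set.Ioi (0 : ℝ), Real.exp (-S ξ / ν))))
      (nhdsWithin 0 (Set.Ioi 0))
      (nhds (L ^ (-(1 / 4) : ℝ) * (Real.Gamma (1 / 2) / Real.Gamma (1 / 4)))) := by
  obtain ⟨c, hc, R, hR, hgrow⟩ := hgrow
  -- small-scale lower bound from the limit hypothesis
  have h1 : ∀ᶠ ξ in nhdsWithin 0 (Set.Ioi 0), L / 2 < S ξ / ξ ^ 4 :=
    hlim.eventually (eventually_gt_nhds (by linarith))
  rw [eventually_nhdsWithin_iff, Metric.eventually_nhds_iff] at h1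
  obtain ⟨δ₀, hδ₀, h1⟩ := h1
  set d : ℝ := min δ₀ R with hd_def
  have hd : 0 < d := lt_min hδ₀ hR
  have hdR : d ≤ R := min_le_right _ _
  -- positive minimum on the compact middle range
  obtain ⟨x₀, hx₀mem, hx₀min⟩ := isCompact_Icc.exists_isMinOn (nonempty_Icc.mpr hdR)
    (hcont.mono (fun x hx => lt_of_lt_of_le hd hx.1))
  have hm : 0 < S x₀ := hpos _ (lt_of_lt_of_le hd hx₀mem.1)
  set c' : ℝ := min c (S x₀ / R) with hc'def
  have hc' : 0 < c' := lt_min hc (div_pos hm hR)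
  -- global lower bound
  have hlow : ∀ ξ : ℝ, 0 < ξ → min (L / 2 * ξ ^ 4) (c' * ξ) ≤ S ξ := by
    intro ξ hξ
    rcases lt_or_ge ξ d with h | h
    · have hdist : dist ξ 0 < δ₀ := by
        rw [Real.dist_eq, sub_zero, abs_of_pos hξ]
        exact h.trans_le (min_le_left _ _)
      have h2 := h1 hdist hξ
      have h4 : (0 : ℝ) < ξ ^ 4 := by positivity
      exact (min_le_left _ _).trans ((lt_div_iff₀ h4).mp h2).le
    · refine (min_le_right _ _).trans ?_
      rcases le_or_gt ξ R with hR' | hR'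
      · have hSm : S x₀ ≤ S ξ := hx₀min ⟨h, hR'⟩
        have h2 : c' * ξ ≤ S x₀ / R * ξ :=
          mul_le_mul_of_nonneg_right (min_le_right _ _) hξ.le
        have h3 : S x₀ / R * ξ ≤ S x₀ := by
          rw [div_mul_eq_mul_div, div_le_iff₀ hR]
          nlinarith
        linarith
      · have h2 : c' * ξ ≤ c * ξ := mul_le_mul_of_nonneg_right (min_le_left _ _) hξ.le
        linarith [hgrow ξ hR'.le]
  -- (ν^{1/4})^4 = ν
  have hr4 : ∀ ν : ℝ, 0 < ν → (ν ^ (1 / 4 : ℝ)) ^ 4 = ν := by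
    intro ν hν
    rw [← Real.rpow_natCast (ν ^ (1 / 4 : ℝ)) 4, ← Real.rpow_mul hν.le]
    norm_num
  -- domination
  have hdom : ∀ ν ∈ Ioc (0 : ℝ) 1, ∀ t ∈ Ioi (0 : ℝ),
      Real.exp (-S (ν ^ (1 / 4 : ℝ) * t) / ν) ≤ exp (-(L / 2 * t ^ 4)) + exp (-(c' * t)) := by
    intro ν hν t ht
    obtain ⟨hν0, hν1⟩ := hν
    have ht' : (0 : ℝ) < t := ht
    have hr : 0 < ν ^ (1 / 4 : ℝ) := rpow_pos_of_pos hν0 _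
    have hξ : 0 < ν ^ (1 / 4 : ℝ) * t := mul_pos hr ht'
    have hS := hlow _ hξ
    have hξ4 : (ν ^ (1 / 4 : ℝ) * t) ^ 4 = ν * t ^ 4 := by rw [mul_pow, hr4 ν hν0]
    rcases min_cases (L / 2 * (ν ^ (1 / 4 : ℝ) * t) ^ 4) (c' * (ν ^ (1 / 4 : ℝ) * t)) with
      ⟨heq, _⟩ | ⟨heq, _⟩
    · rw [heq, hξ4] at hS
      have hle : -S (ν ^ (1 / 4 : ℝ) * t) / ν ≤ -(L / 2 * t ^ 4) := by
        rw [neg_div, neg_le_neg_iff, le_div_iff₀ hν0]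
        nlinarith
      calc Real.exp (-S (ν ^ (1 / 4 : ℝ) * t) / ν) ≤ exp (-(L / 2 * t ^ 4)) := exp_le_exp.mpr hle
        _ ≤ _ := le_add_of_nonneg_right (exp_pos _).le
    · rw [heq] at hS
      have hpow : 1 ≤ ν ^ (1 / 4 : ℝ) / ν := by
        rw [div_eq_mul_inv, ← Real.rpow_neg_one ν, ← Real.rpow_add hν0]
        exact Real.one_le_rpow_of_pos_of_le_one_of_nonpos hν0 hν1 (by norm_num)
      have hle : -S (ν ^ (1 / 4 : ℝ) * t) / ν ≤ -(c' * t) := by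
        rw [neg_div, neg_le_neg_iff]
        have h2 : c' * (ν ^ (1 / 4 : ℝ) * t) / ν ≤ S (ν ^ (1 / 4 : ℝ) * t) / ν := by
          gcongr
        refine le_trans ?_ h2
        rw [mul_comm (ν ^ (1 / 4 : ℝ)) t, ← mul_assoc, mul_div_assoc]
        exact le_mul_of_one_le_right (by positivity) hpow
      calc Real.exp (-S (ν ^ (1 / 4 : ℝ) * t) / ν) ≤ exp (-(c' * t)) := exp_le_exp.mpr hle
        _ ≤ _ := le_add_of_nonneg_left (exp_pos _).le
  -- measurability
  have hmeas : ∀ ν : ℝ, 0 < ν → AEStronglyMeasurable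
      (fun t : ℝ => Real.exp (-S (ν ^ (1 / 4 : ℝ) * t) / ν)) (volume.restrict (Ioi 0)) := by
    intro ν hν
    have hr : 0 < ν ^ (1 / 4 : ℝ) := rpow_pos_of_pos hν _
    have c1 : ContinuousOn (fun t : ℝ => Real.exp (-S (ν ^ (1 / 4 : ℝ) * t) / ν)) (Ioi 0) := by
      apply Real.continuous_exp.comp_continuousOn
      apply ContinuousOn.div_const
      apply ContinuousOn.neg
      exact hcont.comp (continuous_const.mul continuous_id).continuousOn
        (fun t ht => mul_pos hr ht)
    exact c1.aestronglyMeasurable measurableSet_Ioi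
  -- pointwise limit
  have hpt : ∀ t : ℝ, t ∈ Ioi (0 : ℝ) →
      Tendsto (fun ν : ℝ => Real.exp (-S (ν ^ (1 / 4 : ℝ) * t) / ν))
        (nhdsWithin 0 (Set.Ioi 0)) (nhds (exp (-(L * t ^ 4)))) := by
    intro t ht
    have ht' : (0 : ℝ) < t := ht
    have hmap : Tendsto (fun ν : ℝ => ν ^ (1 / 4 : ℝ) * t)
        (nhdsWithin 0 (Set.Ioi 0)) (nhdsWithin 0 (Set.Ioi 0)) := by
      rw [tendsto_nhdsWithin_iff]
      constructor
      · have h0 : Tendsto (fun ν : ℝ => ν ^ (1 / 4 : ℝ)) (nhds 0)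
            (nhds ((0 : ℝ) ^ (1 / 4 : ℝ))) :=
          (Real.continuousAt_rpow_const 0 (1 / 4) (Or.inr (by norm_num))).tendsto
        rw [Real.zero_rpow (by norm_num)] at h0
        have h2 : Tendsto (fun ν : ℝ => ν ^ (1 / 4 : ℝ) * t) (nhdsWithin 0 (Set.Ioi 0))
            (nhds (0 * t)) :=
          (h0.mono_left (nhdsWithin_le_nhds (s := Set.Ioi 0))).mul_const t
        rwa [zero_mul] at h2
      · exact eventually_mem_nhdsWithin.mono
          (fun ν hν => mul_pos (rpow_pos_of_pos hν _) ht')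
    have hcomp : Tendsto (fun ν : ℝ => S (ν ^ (1 / 4 : ℝ) * t) / (ν ^ (1 / 4 : ℝ) * t) ^ 4)
        (nhdsWithin 0 (Set.Ioi 0)) (nhds L) := hlim.comp hmap
    have h2 : Tendsto (fun ν : ℝ =>
        Real.exp (-(S (ν ^ (1 / 4 : ℝ) * t) / (ν ^ (1 / 4 : ℝ) * t) ^ 4 * t ^ 4)))
        (nhdsWithin 0 (Set.Ioi 0)) (nhds (exp (-(L * t ^ 4)))) :=
      (Real.continuous_exp.tendsto _).comp ((hcomp.mul_const (t ^ 4)).neg)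
    refine h2.congr' ?_
    filter_upwards [eventually_mem_nhdsWithin] with ν hν
    have hν0 : (0 : ℝ) < ν := hν
    have hξ4 : (ν ^ (1 / 4 : ℝ) * t) ^ 4 = ν * t ^ 4 := by rw [mul_pow, hr4 ν hν0]
    rw [hξ4]
    congr 1
    field_simp
  -- boundedness eventually
  have hev : ∀ᶠ ν in nhdsWithin (0 : ℝ) (Set.Ioi 0), ν ∈ Ioc (0 : ℝ) 1 :=
    Ioc_mem_nhdsGT_of_mem ⟨le_refl 0, zero_lt_one⟩
  -- DCT for the denominator
  have hB : Tendsto (fun ν : ℝ => ∫ t in Ioi (0 : ℝ), Real.exp (-S (ν ^ (1 / 4 : ℝ) * t) / ν))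
      (nhdsWithin 0 (Set.Ioi 0)) (nhds (∫ t in Ioi (0 : ℝ), exp (-(L * t ^ 4)))) := by
    refine tendsto_integral_filter_of_dominated_convergence
      (fun t => exp (-(L / 2 * t ^ 4)) + exp (-(c' * t))) ?_ ?_ ?_ ?_
    · exact eventually_mem_nhdsWithin.mono (fun ν hν => hmeas ν hν)
    · filter_upwards [hev] with ν hν
      rw [ae_restrict_iff' measurableSet_Ioi]
      filter_upwards with t ht
      rw [Real.norm_eq_abs, Real.abs_exp]
      exact hdom ν hν t ht
    · exact (laplace_int_quartic (L / 2) (by linarith)).add (laplace_int_exp c' hc')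
    · rw [ae_restrict_iff' measurableSet_Ioi]
      filter_upwards with t ht
      exact hpt t ht
  -- DCT for the numerator
  have hA : Tendsto
      (fun ν : ℝ => ∫ t in Ioi (0 : ℝ), Real.exp (-S (ν ^ (1 / 4 : ℝ) * t) / ν) * t)
      (nhdsWithin 0 (Set.Ioi 0)) (nhds (∫ t in Ioi (0 : ℝ), exp (-(L * t ^ 4)) * t)) := by
    refine tendsto_integral_filter_of_dominated_convergence
      (fun t => exp (-(L / 2 * t ^ 4)) * t + exp (-(c' * t)) * t) ?_ ?_ ?_ ?_
    · exact eventually_mem_nhdsWithin.mono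
        (fun ν hν => (hmeas ν hν).mul aestronglyMeasurable_id)
    · filter_upwards [hev] with ν hν
      rw [ae_restrict_iff' measurableSet_Ioi]
      filter_upwards with t ht
      have ht' : (0 : ℝ) < t := ht
      rw [norm_mul, Real.norm_eq_abs, Real.norm_eq_abs, Real.abs_exp, abs_of_pos ht',
        ← add_mul]
      exact mul_le_mul_of_nonneg_right (hdom ν hν t ht) ht'.le
    · exact (laplace_int_quartic_mul (L / 2) (by linarith)).add (laplace_int_exp_mul c' hc')
    · rw [ae_restrict_iff' measurableSet_Ioi]
      filter_upwards with t ht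
      exact (hpt t ht).mul_const t
  -- positivity of the limit denominator
  have hB0 : (∫ t in Ioi (0 : ℝ), exp (-(L * t ^ 4)))
      = L ^ (-(1 / 4) : ℝ) * (1 / 4) * Gamma (1 / 4) := laplace_val_B L hL
  have hB0pos : 0 < ∫ t in Ioi (0 : ℝ), exp (-(L * t ^ 4)) := by
    rw [hB0]
    have := Gamma_pos_of_pos (show (0 : ℝ) < 1 / 4 by norm_num)
    positivity
  -- change of variables identity
  have key : ∀ᶠ ν in nhdsWithin (0 : ℝ) (Set.Ioi 0),
      (fun ν : ℝ => (∫ t in Ioi (0 : ℝ), Real.exp (-S (ν ^ (1 / 4 : ℝ) * t) / ν) * t) /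
          (∫ t in Ioi (0 : ℝ), Real.exp (-S (ν ^ (1 / 4 : ℝ) * t) / ν))) ν
        = ν ^ (-(1 / 4) : ℝ) *
          ((∫ ξ in Set.Ioi (0 : ℝ), Real.exp (-S ξ / ν) * ξ) /
            (∫ ξ in Set.Ioi (0 : ℝ), Real.exp (-S ξ / ν))) := by
    filter_upwards [eventually_mem_nhdsWithin] with ν hν
    have hν0 : (0 : ℝ) < ν := hν
    have hr : 0 < ν ^ (1 / 4 : ℝ) := rpow_pos_of_pos hν0 _
    have hden := integral_comp_mul_left_Ioi (fun ξ => Real.exp (-S ξ / ν)) 0 hr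
    rw [mul_zero, smul_eq_mul] at hden
    have hnum := integral_comp_mul_left_Ioi (fun ξ => Real.exp (-S ξ / ν) * ξ) 0 hr
    rw [mul_zero, smul_eq_mul] at hnum
    have e1 : (∫ t in Ioi (0 : ℝ), Real.exp (-S (ν ^ (1 / 4 : ℝ) * t) / ν) * (ν ^ (1 / 4 : ℝ) * t))
        = ν ^ (1 / 4 : ℝ) * ∫ t in Ioi (0 : ℝ), Real.exp (-S (ν ^ (1 / 4 : ℝ) * t) / ν) * t := by
      rw [← integral_const_mul]
      exact setIntegral_congr_fun measurableSet_Ioi (fun t ht => by ring)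
    rw [e1] at hnum
    have hnum' : (∫ ξ in Set.Ioi (0 : ℝ), Real.exp (-S ξ / ν) * ξ)
        = (ν ^ (1 / 4 : ℝ)) ^ 2 *
          ∫ t in Ioi (0 : ℝ), Real.exp (-S (ν ^ (1 / 4 : ℝ) * t) / ν) * t := by
      calc (∫ ξ in Set.Ioi (0 : ℝ), Real.exp (-S ξ / ν) * ξ)
          = ν ^ (1 / 4 : ℝ) * ((ν ^ (1 / 4 : ℝ))⁻¹ *
            ∫ ξ in Set.Ioi (0 : ℝ), Real.exp (-S ξ / ν) * ξ) := by
            rw [← mul_assoc, mul_inv_cancel₀ hr.ne', one_mul]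
        _ = ν ^ (1 / 4 : ℝ) * (ν ^ (1 / 4 : ℝ) *
            ∫ t in Ioi (0 : ℝ), Real.exp (-S (ν ^ (1 / 4 : ℝ) * t) / ν) * t) := by rw [← hnum]
        _ = _ := by ring
    have hden' : (∫ ξ in Set.Ioi (0 : ℝ), Real.exp (-S ξ / ν))
        = ν ^ (1 / 4 : ℝ) * ∫ t in Ioi (0 : ℝ), Real.exp (-S (ν ^ (1 / 4 : ℝ) * t) / ν) := by
      calc (∫ ξ in Set.Ioi (0 : ℝ), Real.exp (-S ξ / ν))
          = ν ^ (1 / 4 : ℝ) * ((ν ^ (1 / 4 : ℝ))⁻¹ *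
            ∫ ξ in Set.Ioi (0 : ℝ), Real.exp (-S ξ / ν)) := by
            rw [← mul_assoc, mul_inv_cancel₀ hr.ne', one_mul]
        _ = _ := by rw [← hden]
    rw [hnum', hden', Real.rpow_neg hν0.le (1 / 4), laplace_aux_alg _ _ _ hr.ne']
  -- combine
  have hfin : (∫ t in Ioi (0 : ℝ), exp (-(L * t ^ 4)) * t) /
      (∫ t in Ioi (0 : ℝ), exp (-(L * t ^ 4)))
      = L ^ (-(1 / 4) : ℝ) * (Gamma (1 / 2) / Gamma (1 / 4)) := by
    rw [laplace_val_A L hL, laplace_val_B L hL, laplace_val_quot L hL]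
  rw [← hfin]
  exact (hA.div hB hB0pos.ne').congr' key
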